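/- Let M be an integral lattice of hyperbolic signature (1,r) containing a vector h₄ with h₄·h₄ = 6, and let v₁, v₂, v₃ ∈ M be three distinct isotropic vectors with v_i·h₄ = 2 and v_i·v_j = 1 for i ≠ j. Then h₄ = v₁ + v₂ + v₃, the sublattice spanned by v₁,v₂,v₃ is isometric to U ⊥ ⟨−2⟩, and there is no fourth isotropic vector v₄ distinct from v₁,v₂,v₃ with v₄·h₄ = 2 and v₄·v_i = 1 for all i. -/

import Mathlib

/-- Let `φ` have hyperbolic signature `(1,r)`, `h₄` a vector with
`h₄·h₄ = 6`, and `v₁, v₂, v₃` three distinct isotropic vectors with `vᵢ·h₄ = 2` and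
`vᵢ·vⱼ = 1` for `i ≠ j`.  Then `h₄ = v₁+v₂+v₃`, the sublattice spanned by `v₁,v₂,v₃` is
isometric to `U ⊥ ⟨-2⟩`, and there is no fourth such isotropic vector. -/
theorem hyperbolic_lattice_three_isotropic_vectors_sum
    {V : Type*} [AddCommGroup V] [Module ℝ V] [FiniteDimensional ℝ V]
    (r : ℕ)
    (φ : V →ₗ[ℝ] V →ₗ[ℝ] ℝ)
    (hsymm : ∀ x y : V, φ x y = φ y x)
    (hsig : ∃ P N : Submodule ℝ V, IsCompl P N ∧
      Module.finrank ℝ P = 1 ∧ Module.finrank ℝ N = r ∧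
      (∀ x ∈ P, x ≠ 0 → 0 < φ x x) ∧
      (∀ x ∈ N, x ≠ 0 → φ x x < 0) ∧
      (∀ x ∈ P, ∀ y ∈ N, φ x y = 0))
    (h₄ v₁ v₂ v₃ : V)
    (hdist : v₁ ≠ v₂ ∧ v₁ ≠ v₃ ∧ v₂ ≠ v₃)
    (hh : φ h₄ h₄ = 6)
    (hiso : φ v₁ v₁ = 0 ∧ φ v₂ v₂ = 0 ∧ φ v₃ v₃ = 0)
    (hvh : φ v₁ h₄ = 2 ∧ φ v₂ h₄ = 2 ∧ φ v₃ h₄ = 2)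
    (hvv : φ v₁ v₂ = 1 ∧ φ v₁ v₃ = 1 ∧ φ v₂ v₃ = 1) :
    h₄ = v₁ + v₂ + v₃ ∧
    (∃ a b c : V,
      Submodule.span ℤ {a, b, c} = Submodule.span ℤ {v₁, v₂, v₃} ∧
      φ a a = 0 ∧ φ b b = 0 ∧ φ a b = 1 ∧
      φ c c = -2 ∧ φ a c = 0 ∧ φ b c = 0) ∧
    ¬∃ v₄ : V, v₄ ≠ v₁ ∧ v₄ ≠ v₂ ∧ v₄ ≠ v₃ ∧ φ v₄ v₄ = 0 ∧
      φ v₄ h₄ = 2 ∧ φ v₄ v₁ = 1 ∧ φ v₄ v₂ = 1 ∧ φ v₄ v₃ = 1 := by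
  obtain ⟨P, N, hcompl, hP1, hNr, hPpos, hNneg, hPN⟩ := hsig
  obtain ⟨h11, h22, h33⟩ := hiso
  obtain ⟨h1h, h2h, h3h⟩ := hvh
  obtain ⟨h12, h13, h23⟩ := hvv
  have h21 : φ v₂ v₁ = 1 := by rw [hsymm]; exact h12
  have h31 : φ v₃ v₁ = 1 := by rw [hsymm]; exact h13
  have h32 : φ v₃ v₂ = 1 := by rw [hsymm]; exact h23
  have hh1 : φ h₄ v₁ = 2 := by rw [hsymm]; exact h1h
  have hh2 : φ h₄ v₂ = 2 := by rw [hsymm]; exact h2h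
  have hh3 : φ h₄ v₃ = 2 := by rw [hsymm]; exact h3h
  -- Key: any isotropic vector orthogonal to h₄ is zero.
  have key : ∀ w : V, φ w w = 0 → φ w h₄ = 0 → w = 0 := by
    intro w hww hwh
    have hwh' : φ h₄ w = 0 := by rw [hsymm]; exact hwh
    obtain ⟨p, n, hp, hn, hpn⟩ := Submodule.codisjoint_iff_exists_add_eq.mp hcompl.codisjoint w
    obtain ⟨q, m, hq, hm, hqm⟩ := Submodule.codisjoint_iff_exists_add_eq.mp hcompl.codisjoint h₄
    by_cases hp0 : p = 0
    · -- w ∈ N, so w = 0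
      have hwN : w ∈ N := by rw [← hpn, hp0, zero_add]; exact hn
      by_contra hw0
      have := hNneg w hwN hw0
      linarith
    · -- P is one dimensional, so q = c • p for some c
      exfalso
      have hPle : (ℝ ∙ p) ≤ P := by
        rw [Submodule.span_singleton_le_iff_mem]; exact hp
      have hPeq : (ℝ ∙ p) = P :=
        Submodule.eq_of_le_of_finrank_eq hPle (by
          rw [finrank_span_singleton hp0, hP1])
      obtain ⟨c, hc⟩ := (Submodule.mem_span_singleton).mp (hPeq ▸ hq)
      -- the vector c • w - h₄ lies in N
      have hxN : c • w - h₄ ∈ N := by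
        have : c • w - h₄ = c • n - m := by
          rw [← hpn, ← hqm, ← hc]; module
        rw [this]
        exact Submodule.sub_mem N (Submodule.smul_mem N c hn) hm
      have hxx : φ (c • w - h₄) (c • w - h₄) = 6 := by
        simp only [map_sub, map_smul, LinearMap.sub_apply, LinearMap.smul_apply,
          smul_eq_mul, hww, hwh, hwh', hh]
        ring
      by_cases hx0 : c • w - h₄ = 0
      · rw [hx0] at hxx; simp at hxx
      · have := hNneg _ hxN hx0
        linarith
  have hsum : h₄ = v₁ + v₂ + v₃ := by
    have h0 : φ (h₄ - (v₁ + v₂ + v₃)) (h₄ - (v₁ + v₂ + v₃)) = 0 := by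
      simp only [map_sub, map_add, LinearMap.sub_apply, LinearMap.add_apply]
      linarith
    have h1 : φ (h₄ - (v₁ + v₂ + v₃)) h₄ = 0 := by
      simp only [map_sub, map_add, LinearMap.sub_apply, LinearMap.add_apply]
      linarith
    exact (sub_eq_zero.mp (key _ h0 h1))
  refine ⟨hsum, ?_, ?_⟩
  · refine ⟨v₁, v₂, v₃ - v₁ - v₂, ?_, h11, h22, h12, ?_, ?_, ?_⟩
    · apply le_antisymm
      · rw [Submodule.span_le]
        rintro x hx
        simp only [Set.mem_insert_iff, Set.mem_singleton_iff] at hx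
        have m1 : v₁ ∈ Submodule.span ℤ {v₁, v₂, v₃} :=
          Submodule.subset_span (by simp)
        have m2 : v₂ ∈ Submodule.span ℤ {v₁, v₂, v₃} :=
          Submodule.subset_span (by simp)
        have m3 : v₃ ∈ Submodule.span ℤ {v₁, v₂, v₃} :=
          Submodule.subset_span (by simp)
        rcases hx with rfl | rfl | rfl
        · exact m1
        · exact m2
        · exact Submodule.sub_mem _ (Submodule.sub_mem _ m3 m1) m2
      · rw [Submodule.span_le]
        rintro x hx
        simp only [Set.mem_insert_iff, Set.mem_singleton_iff] at hx
        have m1 : v₁ ∈ Submodule.span ℤ {v₁, v₂, v₃ - v₁ - v₂} :=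
          Submodule.subset_span (by simp)
        have m2 : v₂ ∈ Submodule.span ℤ {v₁, v₂, v₃ - v₁ - v₂} :=
          Submodule.subset_span (by simp)
        have mc : v₃ - v₁ - v₂ ∈ Submodule.span ℤ {v₁, v₂, v₃ - v₁ - v₂} :=
          Submodule.subset_span (by simp)
        rcases hx with h | h | h <;> rw [h]
        · exact m1
        · exact m2
        · have hm := Submodule.add_mem _ (Submodule.add_mem _ mc m1) m2
          have e : v₃ - v₁ - v₂ + v₁ + v₂ = v₃ := by abel
          rwa [e] at hm
    · simp only [map_sub, LinearMap.sub_apply]; linarith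
    · simp only [map_sub, LinearMap.sub_apply]; linarith
    · simp only [map_sub, LinearMap.sub_apply]; linarith
  · rintro ⟨v₄, -, -, -, -, h4h, h41, h42, h43⟩
    rw [hsum] at h4h
    simp only [map_add, h41, h42, h43] at h4h
    norm_num at h4h
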